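/- Let p be an odd prime and for integers a, b define T(a,b) = Σ_{k=0}^{(p-1)/2} C(2k,k)² · 16^((p-1)/2 - k) · (a-b)^((p-1)/2 - k) · (-b)^k (the 16-power-cleared form of Σ C(2k,k)² (a-b)^((p-1)/2-k)(-b)^k / 16^k). Then T(a,b) ≡ T(b,a) (mod p²) for all integers a, b. -/

import Mathlib

open Finset Nat

-- ℕ: 2^k * k! * ∏(2j+1) = (2k)!
lemma two_pow_mul_fact_mul_oddProd (k : ℕ) :
    2 ^ k * k ! * ∏ j ∈ range k, (2 * j + 1) = (2 * k)! := by
  induction k with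
  | zero => simp
  | succ k ih =>
    rw [prod_range_succ, pow_succ, Nat.factorial_succ]
    have h1 : 2 * (k + 1) = (2 * k + 1) + 1 := by ring
    rw [h1, Nat.factorial_succ]
    have h2 : 2 * k + 1 = (2 * k) + 1 := rfl
    rw [h2, Nat.factorial_succ, ← ih]
    ring

-- ℕ: (n+k).descFactorial k = ∏ (n+1+j)
lemma descFactorial_add_eq_prod (n : ℕ) : ∀ k : ℕ,
    (n + k).descFactorial k = ∏ j ∈ range k, (n + 1 + j) := by
  intro k
  induction k with
  | zero => simp
  | succ k ih =>
    have h1 : n + (k + 1) = (n + k) + 1 := by ring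
    rw [h1, Nat.succ_descFactorial_succ, ih, prod_range_succ]
    ring

-- Key coefficient identity
lemma keyC (n j : ℕ) (hj : j ≤ n) :
    ∑ m ∈ range (n + 1), n.choose m * n.choose m * m.choose j
      = n.choose j * (2 * n - j).choose (n - j) := by
  have h1 : ∑ m ∈ range (n + 1), n.choose m * n.choose m * m.choose j
      = ∑ m ∈ Ico j (n + 1), n.choose m * n.choose m * m.choose j := by
    refine (Finset.sum_subset ?_ ?_).symm
    · intro x hx
      simp only [Finset.mem_Ico, Finset.mem_range] at *
      omega
    · intro x hx hx'
      simp only [Finset.mem_Ico, Finset.mem_range] at hx hx'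
      rw [Nat.choose_eq_zero_of_lt (show x < j by omega)]
      exact mul_zero _
  rw [h1, Finset.sum_Ico_eq_sum_range]
  have h2 : n + 1 - j = (n - j) + 1 := by omega
  rw [h2]
  have h3 : ∀ i ∈ range (n - j + 1),
      n.choose (j + i) * n.choose (j + i) * (j + i).choose j
        = n.choose j * ((n - j).choose i * n.choose (n - j - i)) := by
    intro i hi
    simp only [mem_range] at hi
    have hji : j + i ≤ n := by omega
    have e1 : n.choose (j + i) * (j + i).choose j = n.choose j * (n - j).choose i := by
      have := Nat.choose_mul (n := n) (k := j + i) (s := j) (Nat.le_add_right _ _)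
      simpa using this
    have e2 : n.choose (j + i) = n.choose (n - (j + i)) := (Nat.choose_symm hji).symm
    have e3 : n - (j + i) = n - j - i := by omega
    calc n.choose (j + i) * n.choose (j + i) * (j + i).choose j
        = n.choose (j + i) * (j + i).choose j * n.choose (j + i) := by ring
      _ = n.choose j * (n - j).choose i * n.choose (n - j - i) := by
          rw [e1]; rw [e2, e3]
      _ = _ := by ring
  rw [Finset.sum_congr rfl h3, ← Finset.mul_sum]
  congr 1
  have hv : ((n - j) + n).choose (n - j)
      = ∑ i ∈ range ((n - j) + 1), (n - j).choose i * n.choose ((n - j) - i) := by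
    rw [Nat.add_choose_eq]
    exact Finset.Nat.sum_antidiagonal_eq_sum_range_succ
      (fun a b => (n - j).choose a * n.choose b) (n - j)
  rw [show 2 * n - j = (n - j) + n by omega, hv]

-- Key polynomial identity (Legendre symmetry)
lemma keyB {R : Type*} [CommRing R] (n : ℕ) (a b : R) :
    ∑ k ∈ range (n + 1),
      (n.choose k : R) * ((n + k).choose k : R) * (a - b) ^ (n - k) * b ^ k
      = ∑ k ∈ range (n + 1), (n.choose k : R) ^ 2 * a ^ k * b ^ (n - k) := by
  have lhs_eq : ∑ k ∈ range (n + 1),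
      (n.choose k : R) * ((n + k).choose k : R) * (a - b) ^ (n - k) * b ^ k
      = ∑ j ∈ range (n + 1),
        (n.choose j : R) * ((2 * n - j).choose (n - j) : R) * (a - b) ^ j * b ^ (n - j) := by
    rw [← Finset.sum_range_reflect
      (fun j => (n.choose j : R) * ((2 * n - j).choose (n - j) : R) * (a - b) ^ j * b ^ (n - j))
      (n + 1)]
    refine Finset.sum_congr rfl fun k hk => ?_
    simp only [mem_range] at hk
    have hk' : k ≤ n := by omega
    have e0 : n + 1 - 1 - k = n - k := by omega
    simp only [e0]
    have e1 : 2 * n - (n - k) = n + k := by omega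
    have e2 : n - (n - k) = k := by omega
    rw [e1, e2, Nat.choose_symm hk']
  rw [lhs_eq]
  have rhs_eq : ∑ k ∈ range (n + 1), (n.choose k : R) ^ 2 * a ^ k * b ^ (n - k)
      = ∑ j ∈ range (n + 1), ∑ k ∈ range (n + 1),
          (n.choose k : R) ^ 2 * (k.choose j : R) * (a - b) ^ j * (b ^ (k - j) * b ^ (n - k)) := by
    rw [Finset.sum_comm]
    refine Finset.sum_congr rfl fun k hk => ?_
    simp only [mem_range] at hk
    have hk' : k ≤ n := by omega
    have ha : (a : R) ^ k
        = ∑ j ∈ range (n + 1), (a - b) ^ j * b ^ (k - j) * (k.choose j : R) := by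
      conv_lhs => rw [show a = a - b + b by ring]
      rw [add_pow]
      refine Finset.sum_subset (fun x hx => ?_) (fun x hx hx' => ?_)
      · simp only [mem_range] at *; omega
      · simp only [mem_range] at hx hx'
        rw [Nat.choose_eq_zero_of_lt (by omega)]
        simp
    rw [ha, Finset.mul_sum, Finset.sum_mul]
    exact Finset.sum_congr rfl fun j _ => by ring
  rw [rhs_eq]
  refine Finset.sum_congr rfl fun j hj => ?_
  simp only [mem_range] at hj
  have hj' : j ≤ n := by omega
  have inner : ∑ k ∈ range (n + 1),
      (n.choose k : R) ^ 2 * (k.choose j : R) * (a - b) ^ j * (b ^ (k - j) * b ^ (n - k))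
      = ∑ k ∈ range (n + 1),
        ((n.choose k * n.choose k * k.choose j : ℕ) : R) * ((a - b) ^ j * b ^ (n - j)) := by
    refine Finset.sum_congr rfl fun k hk => ?_
    simp only [mem_range] at hk
    by_cases hjk : j ≤ k
    · have hb : b ^ (k - j) * b ^ (n - k) = b ^ (n - j) := by
        rw [← pow_add]; congr 1; omega
      rw [hb]; push_cast; ring
    · rw [Nat.choose_eq_zero_of_lt (show k < j by omega)]; push_cast; ring
  rw [inner, ← Finset.sum_mul, ← Nat.cast_sum, keyC n j hj']
  push_cast
  ring

-- Key congruence: central binomial vs Legendre coefficients mod p²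
lemma keyA (p n k : ℕ) (hp : p.Prime) (h2n : 2 * n + 1 = p) (hk : k ≤ n) :
    (((2 * k).choose k : ZMod (p ^ 2))) ^ 2
      = (-16) ^ k * (n.choose k : ZMod (p ^ 2)) * ((n + k).choose k : ZMod (p ^ 2)) := by
  haveI : NeZero (p ^ 2) := ⟨pow_ne_zero 2 hp.pos.ne'⟩
  have hkp : k < p := by omega
  have copf : Nat.Coprime (k !) (p ^ 2) := by
    refine Nat.Coprime.pow_right 2 ?_
    exact Nat.coprime_comm.mp (hp.coprime_iff_not_dvd.mpr
      (fun hd => absurd ((Nat.Prime.dvd_factorial hp).mp hd) (by omega)))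
  have cop2 : Nat.Coprime 2 (p ^ 2) := by
    refine Nat.Coprime.pow_right 2 (Nat.prime_two.coprime_iff_not_dvd.mpr ?_)
    intro h
    omega
  have huf : IsUnit ((k ! : ℕ) : ZMod (p ^ 2)) := (ZMod.isUnit_iff_coprime _ _).mpr copf
  have hu2 : IsUnit (2 : ZMod (p ^ 2)) := by
    have := (ZMod.isUnit_iff_coprime 2 (p ^ 2)).mpr cop2
    simpa using this
  set R := ZMod (p ^ 2)
  -- nat facts
  have hf1 : (2 * k).choose k * k ! * k ! = (2 * k)! := by
    have h := Nat.choose_mul_factorial_mul_factorial (show k ≤ 2 * k by omega)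
    rw [show 2 * k - k = k by omega] at h
    exact h
  have f1 : ((2 * k).choose k : R) * (k ! : R) * (k ! : R) = ((2 * k)! : R) := by
    rw [← hf1, Nat.cast_mul, Nat.cast_mul]
  have f5 : (2 : R) ^ k * (k ! : R) * ((∏ j ∈ range k, (2 * j + 1) : ℕ) : R)
      = ((2 * k)! : R) := by
    exact_mod_cast congrArg (Nat.cast : ℕ → R) (two_pow_mul_fact_mul_oddProd k)
  have f2 : ((n.descFactorial k : ℕ) : R) = (k ! : R) * (n.choose k : R) := by
    rw [Nat.descFactorial_eq_factorial_mul_choose n k]; exact Nat.cast_mul _ _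
  have f3 : (((n + k).descFactorial k : ℕ) : R) = (k ! : R) * ((n + k).choose k : R) := by
    rw [Nat.descFactorial_eq_factorial_mul_choose (n + k) k]; exact Nat.cast_mul _ _
  have hp2 : (2 * (n : R) + 1) ^ 2 = 0 := by
    have h0 : (((2 * n + 1) ^ 2 : ℕ) : R) = 0 := by
      rw [h2n]; exact ZMod.natCast_self _
    push_cast at h0
    linear_combination h0
  have f4 : ((n.descFactorial k : ℕ) : R) * (((n + k).descFactorial k : ℕ) : R) * (4 : R) ^ k
      = (-1 : R) ^ k * ((∏ j ∈ range k, (2 * j + 1) : ℕ) : R) ^ 2 := by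
    rw [Nat.descFactorial_eq_prod_range n k, descFactorial_add_eq_prod n k]
    push_cast (config := { zetaDelta := true })
    have hc4 : (4 : R) ^ k = ∏ _j ∈ range k, (4 : R) := by
      rw [Finset.prod_const, Finset.card_range]
    have hcm1 : (-1 : R) ^ k = ∏ _j ∈ range k, (-1 : R) := by
      rw [Finset.prod_const, Finset.card_range]
    rw [hc4, hcm1, ← Finset.prod_pow, ← Finset.prod_mul_distrib, ← Finset.prod_mul_distrib,
        ← Finset.prod_mul_distrib]
    refine Finset.prod_congr rfl fun j hj => ?_
    simp only [mem_range] at hj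
    have hjn : j ≤ n := by omega
    rw [Nat.cast_sub hjn]
    linear_combination hp2
  have h4 : (4 : R) ^ k = ((2 : R) ^ k) ^ 2 := by
    rw [show (4 : R) = 2 ^ 2 by norm_num, ← pow_mul, mul_comm 2 k, pow_mul]
  rw [h4] at f4
  have h16 : (-16 : R) ^ k = (-1 : R) ^ k * ((2 : R) ^ k) ^ 4 := by
    rw [show (-16 : R) = -1 * 2 ^ 4 by norm_num, mul_pow, ← pow_mul, mul_comm 4 k, pow_mul]
  have hs : (-1 : R) ^ k * (-1 : R) ^ k = 1 := by
    rw [← mul_pow]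
    norm_num
  have hM : IsUnit (((2 : R) ^ k) ^ 2 * ((k ! : ℕ) : R) ^ 4) := ((hu2.pow k).pow 2).mul (huf.pow 4)
  refine hM.mul_left_cancel ?_
  rw [h16]
  have g1 : (((2 * k).choose k : R)) ^ 2 * ((k ! : ℕ) : R) ^ 4 = (((2 * k)! : ℕ) : R) ^ 2 := by
    linear_combination (((2 * k).choose k : R) * ((k ! : ℕ) : R) ^ 2 + (((2 * k)! : ℕ) : R)) * f1
  have g5 : ((2 : R) ^ k) ^ 2 * ((k ! : ℕ) : R) ^ 2 * ((∏ j ∈ range k, (2 * j + 1) : ℕ) : R) ^ 2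
      = (((2 * k)! : ℕ) : R) ^ 2 := by
    linear_combination ((2 : R) ^ k * ((k ! : ℕ) : R) * ((∏ j ∈ range k, (2 * j + 1) : ℕ) : R)
      + (((2 * k)! : ℕ) : R)) * f5
  have g2 : ((k ! : ℕ) : R) ^ 2 * ((n.choose k : R) * ((n + k).choose k : R))
      = ((n.descFactorial k : ℕ) : R) * (((n + k).descFactorial k : ℕ) : R) := by
    linear_combination (-( ((k ! : ℕ) : R) * ((n + k).choose k : R))) * f2
      + (-(((n.descFactorial k : ℕ) : R))) * f3
  linear_combination ((2 : R) ^ k) ^ 2 * g1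
    + (-((-1 : R) ^ k * ((2 : R) ^ k) ^ 6 * ((k ! : ℕ) : R) ^ 2)) * g2
    + (-((-1 : R) ^ k * ((2 : R) ^ k) ^ 4 * ((k ! : ℕ) : R) ^ 2)) * f4
    + (-(((k ! : ℕ) : R) ^ 2 * ((∏ j ∈ range k, (2 * j + 1) : ℕ) : R) ^ 2 * ((2 : R) ^ k) ^ 4)) * hs
    + (-(((2 : R) ^ k) ^ 2)) * g5

lemma sum_sq_symm {R : Type*} [CommRing R] (n : ℕ) (x y : R) :
    ∑ k ∈ range (n + 1), (n.choose k : R) ^ 2 * x ^ k * y ^ (n - k)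
      = ∑ k ∈ range (n + 1), (n.choose k : R) ^ 2 * y ^ k * x ^ (n - k) := by
  rw [← Finset.sum_range_reflect (fun k => (n.choose k : R) ^ 2 * y ^ k * x ^ (n - k)) (n + 1)]
  refine Finset.sum_congr rfl fun k hk => ?_
  simp only [mem_range] at hk
  have hk' : k ≤ n := by omega
  have e0 : n + 1 - 1 - k = n - k := by omega
  simp only [e0]
  have e1 : n - (n - k) = k := by omega
  rw [e1, Nat.choose_symm hk']
  ring

lemma transform (p n : ℕ) (hp : p.Prime) (h2n : 2 * n + 1 = p) (x y : ZMod (p ^ 2)) :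
    (∑ k ∈ range (n + 1),
        ((2 * k).choose k : ZMod (p ^ 2)) ^ 2 * 16 ^ (n - k) * (x - y) ^ (n - k) * (-y) ^ k)
      = 16 ^ n * ∑ k ∈ range (n + 1),
          (n.choose k : ZMod (p ^ 2)) ^ 2 * x ^ k * y ^ (n - k) := by
  rw [← keyB n x y, Finset.mul_sum]
  refine Finset.sum_congr rfl fun k hk => ?_
  simp only [mem_range] at hk
  have hk' : k ≤ n := by omega
  rw [keyA p n k hp h2n hk']
  have h3 : (-16 : ZMod (p ^ 2)) ^ k * (-y) ^ k = 16 ^ k * y ^ k := by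
    rw [← mul_pow, ← mul_pow, neg_mul_neg]
  have h2 : (16 : ZMod (p ^ 2)) ^ (n - k) * 16 ^ k = 16 ^ n := by
    rw [← pow_add, Nat.sub_add_cancel hk']
  linear_combination ((n.choose k : ZMod (p ^ 2)) * ((n + k).choose k : ZMod (p ^ 2))
      * 16 ^ (n - k) * (x - y) ^ (n - k)) * h3
    + ((n.choose k : ZMod (p ^ 2)) * ((n + k).choose k : ZMod (p ^ 2))
      * (x - y) ^ (n - k) * y ^ k) * h2

theorem T_symm (p : ℕ) (hp : p.Prime) (hodd : Odd p)
    (T : ℤ → ℤ → ℤ)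
    (hT : ∀ a b : ℤ, T a b =
      ∑ k ∈ range ((p - 1) / 2 + 1),
        ((Nat.choose (2 * k) k : ℤ)) ^ 2 * 16 ^ ((p - 1) / 2 - k) *
          (a - b) ^ ((p - 1) / 2 - k) * (-b) ^ k)
    (a b : ℤ) :
    T a b ≡ T b a [ZMOD (p : ℤ) ^ 2] := by
  have hp2 := hp.two_le
  obtain ⟨m, hm⟩ := hodd
  set n := (p - 1) / 2 with hn
  have h2n : 2 * n + 1 = p := by omega
  have hcast : ∀ u v : ℤ, ((T u v : ℤ) : ZMod (p ^ 2))
      = 16 ^ n * ∑ k ∈ range (n + 1),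
          (n.choose k : ZMod (p ^ 2)) ^ 2 * (u : ZMod (p ^ 2)) ^ k * (v : ZMod (p ^ 2)) ^ (n - k) := by
    intro u v
    rw [hT]
    push_cast
    exact transform p n hp h2n u v
  have hmain : ((T a b : ℤ) : ZMod (p ^ 2)) = ((T b a : ℤ) : ZMod (p ^ 2)) := by
    rw [hcast, hcast, sum_sq_symm]
  have h := (ZMod.intCast_eq_intCast_iff _ _ _).mp hmain
  have hmod : ((p ^ 2 : ℕ) : ℤ) = (p : ℤ) ^ 2 := by push_cast; ring
  rwa [hmod] at h
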